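/- Let f : ℝ → ℝ be continuous with s·f(s) ≥ 0 for all s, let G(s) = ∫₀^s f(ξ)dξ, and define f_k as in the Strauss approximation (piecewise in terms of difference quotients of G). Then for each k ∈ ℕ, f_k is Lipschitz continuous: there exists c_k > 0 such that |f_k(ξ) − f_k(η)| ≤ c_k|ξ − η| for all ξ, η ∈ ℝ. -/

import Mathlib

open Set

/-- G(s) = ∫₀^s f(ξ) dξ -/
noncomputable def Gfun (f : ℝ → ℝ) (s : ℝ) : ℝ := ∫ ξ in (0:ℝ)..s, f ξ

/-- The Strauss approximation f_k of f, defined piecewise via G = Gfun f. -/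
noncomputable def strauss (f : ℝ → ℝ) (k : ℕ) (s : ℝ) : ℝ :=
  let G := Gfun f
  if s ≤ -(k:ℝ) then -(k:ℝ) * (G (-(k:ℝ) - 1/(k:ℝ)) - G (-(k:ℝ)))
  else if s ≤ -(1/(k:ℝ)) then -(k:ℝ) * (G (s - 1/(k:ℝ)) - G s)
  else if s ≤ 0 then (k:ℝ)^2 * s * (G (-(2/(k:ℝ))) - G (-(1/(k:ℝ))))
  else if s ≤ 1/(k:ℝ) then (k:ℝ)^2 * s * (G (2/(k:ℝ)) - G (1/(k:ℝ)))
  else if s ≤ (k:ℝ) then (k:ℝ) * (G (s + 1/(k:ℝ)) - G s)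
  else (k:ℝ) * (G ((k:ℝ) + 1/(k:ℝ)) - G (k:ℝ))

set_option linter.unusedSectionVars false
set_option linter.unreachableTactic false
set_option linter.unusedTactic false
set_option linter.unusedVariables false
set_option maxHeartbeats 800000

/-- Difference of `Gfun` values is an interval integral. -/
lemma Gsub (f : ℝ → ℝ) (hf : Continuous f) (x y : ℝ) :
    Gfun f x - Gfun f y = ∫ ξ in y..x, f ξ := by
  unfold Gfun
  rw [intervalIntegral.integral_interval_sub_left (hf.intervalIntegrable _ _)
    (hf.intervalIntegrable _ _)]

/-- `Gfun f` is Lipschitz with constant `M` on an interval where `|f| ≤ M`. -/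
lemma Glip (f : ℝ → ℝ) (hf : Continuous f) {M B : ℝ}
    (hM : ∀ s ∈ Icc (-B) B, |f s| ≤ M) :
    ∀ x y, x ∈ Icc (-B) B → y ∈ Icc (-B) B → |Gfun f x - Gfun f y| ≤ M * |x - y| := by
  intro x y hx hy
  rw [Gsub f hf]
  have h := intervalIntegral.norm_integral_le_of_norm_le_const (C := M) (f := f)
    (a := y) (b := x) ?_
  · simpa [Real.norm_eq_abs] using h
  · intro t ht
    have hsub : Set.uIoc y x ⊆ Icc (-B) B := by
      refine subset_trans Set.Ioc_subset_Icc_self ?_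
      exact Set.uIcc_subset_Icc hy hx
    simpa [Real.norm_eq_abs] using hM t (hsub ht)

section Formulas
variable (f : ℝ → ℝ) (k : ℕ) (hk1 : 1 ≤ (k:ℝ))
include hk1

lemma e1 : ∀ s ≤ -(k:ℝ),
    strauss f k s = -(k:ℝ) * (Gfun f (-(k:ℝ) - 1/(k:ℝ)) - Gfun f (-(k:ℝ))) := by
  intro s hs; unfold strauss; simp only [if_pos hs]

lemma e2 : ∀ s, -(k:ℝ) ≤ s → s ≤ -(1/(k:ℝ)) →
    strauss f k s = -(k:ℝ) * (Gfun f (s - 1/(k:ℝ)) - Gfun f s) := by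
  intro s h1 h2; unfold strauss
  split_ifs with ha hb
  · have : s = -(k:ℝ) := le_antisymm ha h1
    subst this; ring_nf
  · rfl
  all_goals (exfalso; linarith)

lemma e3 : ∀ s, -(1/(k:ℝ)) ≤ s → s ≤ 0 →
    strauss f k s = (k:ℝ)^2 * s * (Gfun f (-(2/(k:ℝ))) - Gfun f (-(1/(k:ℝ)))) := by
  intro s h1 h2; unfold strauss
  have hkpos : (0:ℝ) < k := by linarith
  split_ifs with ha hb hc
  · have hik : 1/(k:ℝ) ≤ 1 := by
      rw [div_le_one hkpos]; exact hk1
    have h5 : (k:ℝ) ≤ 1/(k:ℝ) := by linarith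
    have hk1' : (k:ℝ) = 1 := by
      have := mul_le_mul_of_nonneg_left h5 (le_of_lt hkpos)
      rw [mul_one_div_cancel (ne_of_gt hkpos)] at this
      nlinarith
    rw [hk1'] at ha h1 ⊢
    have : s = -1 := by norm_num at ha h1 ⊢; linarith
    subst this; norm_num
  · have : s = -(1/(k:ℝ)) := le_antisymm hb h1
    subst this
    have : -(1/(k:ℝ)) - 1/(k:ℝ) = -(2/(k:ℝ)) := by ring
    rw [this]; field_simp
  · rfl
  all_goals (exfalso; linarith)

lemma e4 : ∀ s, 0 ≤ s → s ≤ 1/(k:ℝ) →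
    strauss f k s = (k:ℝ)^2 * s * (Gfun f (2/(k:ℝ)) - Gfun f (1/(k:ℝ))) := by
  intro s h1 h2; unfold strauss
  have hkpos : (0:ℝ) < k := by linarith
  have hik : 0 < 1/(k:ℝ) := by positivity
  split_ifs with ha hb hc hd
  · exfalso; linarith
  · exfalso; linarith
  · have : s = 0 := le_antisymm hc h1
    subst this; ring
  · rfl
  all_goals (exfalso; linarith)

lemma e5 : ∀ s, 1/(k:ℝ) ≤ s → s ≤ (k:ℝ) →
    strauss f k s = (k:ℝ) * (Gfun f (s + 1/(k:ℝ)) - Gfun f s) := by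
  intro s h1 h2; unfold strauss
  have hkpos : (0:ℝ) < k := by linarith
  have hik : 0 < 1/(k:ℝ) := by positivity
  split_ifs with ha hb hc hd he
  · exfalso; linarith
  · exfalso; linarith
  · exfalso; linarith
  · have : s = 1/(k:ℝ) := le_antisymm hd h1
    subst this
    have h2k : 1/(k:ℝ) + 1/(k:ℝ) = 2/(k:ℝ) := by ring
    rw [h2k]; field_simp
  · rfl
  all_goals (exfalso; linarith)

lemma e6 : ∀ s, (k:ℝ) ≤ s →
    strauss f k s = (k:ℝ) * (Gfun f ((k:ℝ) + 1/(k:ℝ)) - Gfun f (k:ℝ)) := by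
  intro s h1; unfold strauss
  have hkpos : (0:ℝ) < k := by linarith
  have hik : 0 < 1/(k:ℝ) := by positivity
  have hik1 : 1/(k:ℝ) ≤ 1 := by rw [div_le_one hkpos]; exact hk1
  split_ifs with ha hb hc hd he
  · exfalso; linarith
  · exfalso; linarith
  · exfalso; linarith
  · have h5 : (k:ℝ) ≤ 1/(k:ℝ) := le_trans h1 hd
    have hk1' : (k:ℝ) = 1 := by nlinarith
    rw [hk1'] at hd h1 ⊢
    have : s = 1 := by norm_num at hd h1 ⊢; linarith
    subst this; norm_num
  · have : s = (k:ℝ) := le_antisymm he h1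
    subst this; rfl
  · rfl

end Formulas

/-- Gluing Lipschitz estimates on `[b, a]` and `[a, ∞)` to `[b, ∞)`. -/
lemma glueAux (g : ℝ → ℝ) {c a b : ℝ} (hba : b ≤ a)
    (h1 : ∀ ξ η, b ≤ ξ → ξ ≤ a → b ≤ η → η ≤ a → |g ξ - g η| ≤ c * |ξ - η|)
    (h2 : ∀ ξ η, a ≤ ξ → a ≤ η → |g ξ - g η| ≤ c * |ξ - η|) :
    ∀ ξ η, b ≤ ξ → b ≤ η → |g ξ - g η| ≤ c * |ξ - η| := by
  intro ξ η hξ hη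
  rcases le_total ξ a with h | h <;> rcases le_total η a with h' | h'
  · exact h1 ξ η hξ h hη h'
  · calc |g ξ - g η| ≤ |g ξ - g a| + |g a - g η| := abs_sub_le _ _ _
      _ ≤ c * |ξ - a| + c * |a - η| :=
          add_le_add (h1 ξ a hξ h hba le_rfl) (h2 a η le_rfl h')
      _ = c * |ξ - η| := by
          rw [abs_of_nonpos (by linarith), abs_of_nonpos (by linarith),
            abs_of_nonpos (by linarith)]; ring
  · calc |g ξ - g η| ≤ |g ξ - g a| + |g a - g η| := abs_sub_le _ _ _
      _ ≤ c * |ξ - a| + c * |a - η| :=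
          add_le_add (h2 ξ a h le_rfl) (h1 a η hba le_rfl hη h')
      _ = c * |ξ - η| := by
          rw [abs_of_nonneg (by linarith), abs_of_nonneg (by linarith),
            abs_of_nonneg (by linarith)]; ring
  · exact h2 ξ η h h'

/-- Gluing Lipschitz estimates on `(-∞, a]` and `[a, ∞)` to all of `ℝ`. -/
lemma glueFin (g : ℝ → ℝ) {c a : ℝ}
    (h1 : ∀ ξ η, ξ ≤ a → η ≤ a → |g ξ - g η| ≤ c * |ξ - η|)
    (h2 : ∀ ξ η, a ≤ ξ → a ≤ η → |g ξ - g η| ≤ c * |ξ - η|) :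
    ∀ ξ η, |g ξ - g η| ≤ c * |ξ - η| := by
  intro ξ η
  rcases le_total ξ a with h | h <;> rcases le_total η a with h' | h'
  · exact h1 ξ η h h'
  · calc |g ξ - g η| ≤ |g ξ - g a| + |g a - g η| := abs_sub_le _ _ _
      _ ≤ c * |ξ - a| + c * |a - η| :=
          add_le_add (h1 ξ a h le_rfl) (h2 a η le_rfl h')
      _ = c * |ξ - η| := by
          rw [abs_of_nonpos (by linarith), abs_of_nonpos (by linarith),
            abs_of_nonpos (by linarith)]; ring
  · calc |g ξ - g η| ≤ |g ξ - g a| + |g a - g η| := abs_sub_le _ _ _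
      _ ≤ c * |ξ - a| + c * |a - η| :=
          add_le_add (h2 ξ a h le_rfl) (h1 a η le_rfl h')
      _ = c * |ξ - η| := by
          rw [abs_of_nonneg (by linarith), abs_of_nonneg (by linarith),
            abs_of_nonneg (by linarith)]; ring
  · exact h2 ξ η h h'

/-- each f_k is Lipschitz: ∃ c_k > 0, |f_k ξ − f_k η| ≤ c_k |ξ − η|. -/
theorem stmt_6 (f : ℝ → ℝ) (hf : Continuous f) (hsf : ∀ s : ℝ, 0 ≤ s * f s)
    (k : ℕ) (hk : 0 < k) :
    ∃ c : ℝ, 0 < c ∧ ∀ ξ η : ℝ, |strauss f k ξ - strauss f k η| ≤ c * |ξ - η| := by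
  have hk1 : 1 ≤ (k:ℝ) := by exact_mod_cast hk
  have hkpos : (0:ℝ) < k := by linarith
  have hik : 0 < 1/(k:ℝ) := by positivity
  have hik1 : 1/(k:ℝ) ≤ 1 := by rw [div_le_one hkpos]; exact hk1
  set B : ℝ := (k:ℝ) + 1 with hB
  obtain ⟨M, hMn⟩ := (isCompact_Icc (a := -B) (b := B)).exists_bound_of_continuousOn
    hf.continuousOn
  have hM : ∀ s ∈ Icc (-B) B, |f s| ≤ M := by
    intro s hs; simpa [Real.norm_eq_abs] using hMn s hs
  have hM0 : 0 ≤ M := by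
    have h0 : (0:ℝ) ∈ Icc (-B) B := by constructor <;> simp [hB] <;> linarith
    exact le_trans (abs_nonneg _) (hM 0 h0)
  have h2k : 2/(k:ℝ) ≤ 2 := by rw [div_le_iff₀ hkpos]; nlinarith
  have h2kpos : 0 < 2/(k:ℝ) := by positivity
  have GLp := Glip f hf hM
  set c : ℝ := 2*(k:ℝ)*M + 1 with hc
  have hcpos : 0 < c := by nlinarith
  set g : ℝ → ℝ := strauss f k with hg
  -- piece 1 : constant on (-∞, -k]
  have L1 : ∀ ξ η, ξ ≤ -(k:ℝ) → η ≤ -(k:ℝ) → |g ξ - g η| ≤ c * |ξ - η| := by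
    intro ξ η h h'
    rw [hg, e1 f k hk1 ξ h, e1 f k hk1 η h']
    simp only [sub_self, abs_zero]
    positivity
  -- piece 2 : on [-k, -1/k]
  have L2 : ∀ ξ η, -(k:ℝ) ≤ ξ → ξ ≤ -(1/(k:ℝ)) → -(k:ℝ) ≤ η → η ≤ -(1/(k:ℝ)) →
      |g ξ - g η| ≤ c * |ξ - η| := by
    intro ξ η hξ1 hξ2 hη1 hη2
    rw [hg, e2 f k hk1 ξ hξ1 hξ2, e2 f k hk1 η hη1 hη2]
    have m1 : ξ - 1/(k:ℝ) ∈ Icc (-B) B := by constructor <;> simp only [hB] <;> linarith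
    have m2 : η - 1/(k:ℝ) ∈ Icc (-B) B := by constructor <;> simp only [hB] <;> linarith
    have m3 : ξ ∈ Icc (-B) B := by constructor <;> simp only [hB] <;> linarith
    have m4 : η ∈ Icc (-B) B := by constructor <;> simp only [hB] <;> linarith
    have t1 : |Gfun f (ξ - 1/(k:ℝ)) - Gfun f (η - 1/(k:ℝ))| ≤ M * |ξ - η| := by
      have := GLp _ _ m1 m2
      have he : (ξ - 1/(k:ℝ)) - (η - 1/(k:ℝ)) = ξ - η := by ring
      rwa [he] at this
    have t2 : |Gfun f ξ - Gfun f η| ≤ M * |ξ - η| := GLp _ _ m3 m4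
    have key : -(k:ℝ) * (Gfun f (ξ - 1/(k:ℝ)) - Gfun f ξ)
        - -(k:ℝ) * (Gfun f (η - 1/(k:ℝ)) - Gfun f η)
        = -((k:ℝ) * ((Gfun f (ξ - 1/(k:ℝ)) - Gfun f (η - 1/(k:ℝ)))
            - (Gfun f ξ - Gfun f η))) := by ring
    rw [key, abs_neg, abs_mul, abs_of_nonneg hkpos.le]
    have h3 : |(Gfun f (ξ - 1/(k:ℝ)) - Gfun f (η - 1/(k:ℝ))) - (Gfun f ξ - Gfun f η)|
        ≤ 2*M*|ξ - η| := by
      calc _ ≤ |Gfun f (ξ - 1/(k:ℝ)) - Gfun f (η - 1/(k:ℝ))| + |Gfun f ξ - Gfun f η| :=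
            abs_sub _ _
        _ ≤ M * |ξ - η| + M * |ξ - η| := add_le_add t1 t2
        _ = 2*M*|ξ - η| := by ring
    nlinarith [abs_nonneg (ξ - η),
      abs_nonneg ((Gfun f (ξ - 1/(k:ℝ)) - Gfun f (η - 1/(k:ℝ))) - (Gfun f ξ - Gfun f η))]
  -- piece 3 : linear on [-1/k, 0]
  have L3 : ∀ ξ η, -(1/(k:ℝ)) ≤ ξ → ξ ≤ 0 → -(1/(k:ℝ)) ≤ η → η ≤ 0 →
      |g ξ - g η| ≤ c * |ξ - η| := by
    intro ξ η hξ1 hξ2 hη1 hη2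
    rw [hg, e3 f k hk1 ξ hξ1 hξ2, e3 f k hk1 η hη1 hη2]
    have m1 : -(2/(k:ℝ)) ∈ Icc (-B) B := by constructor <;> simp only [hB] <;> linarith
    have m2 : -(1/(k:ℝ)) ∈ Icc (-B) B := by constructor <;> simp only [hB] <;> linarith
    have hm : |Gfun f (-(2/(k:ℝ))) - Gfun f (-(1/(k:ℝ)))| ≤ M * (1/(k:ℝ)) := by
      have := GLp _ _ m1 m2
      have he : |(-(2/(k:ℝ))) - (-(1/(k:ℝ)))| = 1/(k:ℝ) := by
        rw [show (-(2/(k:ℝ))) - (-(1/(k:ℝ))) = -(1/(k:ℝ)) by ring, abs_neg, abs_of_pos hik]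
      rwa [he] at this
    have key : (k:ℝ)^2 * ξ * (Gfun f (-(2/(k:ℝ))) - Gfun f (-(1/(k:ℝ))))
        - (k:ℝ)^2 * η * (Gfun f (-(2/(k:ℝ))) - Gfun f (-(1/(k:ℝ))))
        = (k:ℝ)^2 * (Gfun f (-(2/(k:ℝ))) - Gfun f (-(1/(k:ℝ)))) * (ξ - η) := by ring
    rw [key, abs_mul, abs_mul, abs_of_nonneg (sq_nonneg (k:ℝ))]
    have step : (k:ℝ)^2 * |Gfun f (-(2/(k:ℝ))) - Gfun f (-(1/(k:ℝ)))| ≤ (k:ℝ) * M := by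
      have h4 : (k:ℝ)^2 * (M * (1/(k:ℝ))) = (k:ℝ) * M := by field_simp
      nlinarith [sq_nonneg (k:ℝ)]
    nlinarith [abs_nonneg (ξ - η)]
  -- piece 4 : linear on [0, 1/k]
  have L4 : ∀ ξ η, 0 ≤ ξ → ξ ≤ 1/(k:ℝ) → 0 ≤ η → η ≤ 1/(k:ℝ) →
      |g ξ - g η| ≤ c * |ξ - η| := by
    intro ξ η hξ1 hξ2 hη1 hη2
    rw [hg, e4 f k hk1 ξ hξ1 hξ2, e4 f k hk1 η hη1 hη2]
    have m1 : 2/(k:ℝ) ∈ Icc (-B) B := by constructor <;> simp only [hB] <;> linarith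
    have m2 : 1/(k:ℝ) ∈ Icc (-B) B := by constructor <;> simp only [hB] <;> linarith
    have hm : |Gfun f (2/(k:ℝ)) - Gfun f (1/(k:ℝ))| ≤ M * (1/(k:ℝ)) := by
      have := GLp _ _ m1 m2
      have he : |(2/(k:ℝ)) - (1/(k:ℝ))| = 1/(k:ℝ) := by
        rw [show (2/(k:ℝ)) - (1/(k:ℝ)) = 1/(k:ℝ) by ring, abs_of_pos hik]
      rwa [he] at this
    have key : (k:ℝ)^2 * ξ * (Gfun f (2/(k:ℝ)) - Gfun f (1/(k:ℝ)))
        - (k:ℝ)^2 * η * (Gfun f (2/(k:ℝ)) - Gfun f (1/(k:ℝ)))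
        = (k:ℝ)^2 * (Gfun f (2/(k:ℝ)) - Gfun f (1/(k:ℝ))) * (ξ - η) := by ring
    rw [key, abs_mul, abs_mul, abs_of_nonneg (sq_nonneg (k:ℝ))]
    have step : (k:ℝ)^2 * |Gfun f (2/(k:ℝ)) - Gfun f (1/(k:ℝ))| ≤ (k:ℝ) * M := by
      have h4 : (k:ℝ)^2 * (M * (1/(k:ℝ))) = (k:ℝ) * M := by field_simp
      nlinarith [sq_nonneg (k:ℝ)]
    nlinarith [abs_nonneg (ξ - η)]
  -- piece 5 : on [1/k, k]
  have L5 : ∀ ξ η, 1/(k:ℝ) ≤ ξ → ξ ≤ (k:ℝ) → 1/(k:ℝ) ≤ η → η ≤ (k:ℝ) →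
      |g ξ - g η| ≤ c * |ξ - η| := by
    intro ξ η hξ1 hξ2 hη1 hη2
    rw [hg, e5 f k hk1 ξ hξ1 hξ2, e5 f k hk1 η hη1 hη2]
    have m1 : ξ + 1/(k:ℝ) ∈ Icc (-B) B := by constructor <;> simp only [hB] <;> linarith
    have m2 : η + 1/(k:ℝ) ∈ Icc (-B) B := by constructor <;> simp only [hB] <;> linarith
    have m3 : ξ ∈ Icc (-B) B := by constructor <;> simp only [hB] <;> linarith
    have m4 : η ∈ Icc (-B) B := by constructor <;> simp only [hB] <;> linarith
    have t1 : |Gfun f (ξ + 1/(k:ℝ)) - Gfun f (η + 1/(k:ℝ))| ≤ M * |ξ - η| := by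
      have := GLp _ _ m1 m2
      have he : (ξ + 1/(k:ℝ)) - (η + 1/(k:ℝ)) = ξ - η := by ring
      rwa [he] at this
    have t2 : |Gfun f ξ - Gfun f η| ≤ M * |ξ - η| := GLp _ _ m3 m4
    have key : (k:ℝ) * (Gfun f (ξ + 1/(k:ℝ)) - Gfun f ξ)
        - (k:ℝ) * (Gfun f (η + 1/(k:ℝ)) - Gfun f η)
        = (k:ℝ) * ((Gfun f (ξ + 1/(k:ℝ)) - Gfun f (η + 1/(k:ℝ)))
            - (Gfun f ξ - Gfun f η)) := by ring
    rw [key, abs_mul, abs_of_nonneg hkpos.le]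
    have h3 : |(Gfun f (ξ + 1/(k:ℝ)) - Gfun f (η + 1/(k:ℝ))) - (Gfun f ξ - Gfun f η)|
        ≤ 2*M*|ξ - η| := by
      calc _ ≤ |Gfun f (ξ + 1/(k:ℝ)) - Gfun f (η + 1/(k:ℝ))| + |Gfun f ξ - Gfun f η| :=
            abs_sub _ _
        _ ≤ M * |ξ - η| + M * |ξ - η| := add_le_add t1 t2
        _ = 2*M*|ξ - η| := by ring
    nlinarith [abs_nonneg (ξ - η),
      abs_nonneg ((Gfun f (ξ + 1/(k:ℝ)) - Gfun f (η + 1/(k:ℝ))) - (Gfun f ξ - Gfun f η))]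
  -- piece 6 : constant on [k, ∞)
  have L6 : ∀ ξ η, (k:ℝ) ≤ ξ → (k:ℝ) ≤ η → |g ξ - g η| ≤ c * |ξ - η| := by
    intro ξ η h h'
    rw [hg, e6 f k hk1 ξ h, e6 f k hk1 η h']
    simp only [sub_self, abs_zero]
    positivity
  -- glue all pieces
  have P5 := glueAux g (show 1/(k:ℝ) ≤ (k:ℝ) by linarith) L5 L6
  have P4 := glueAux g (show (0:ℝ) ≤ 1/(k:ℝ) by linarith) L4 P5
  have P3 := glueAux g (show -(1/(k:ℝ)) ≤ (0:ℝ) by linarith) L3 P4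
  have P2 := glueAux g (show -(k:ℝ) ≤ -(1/(k:ℝ)) by linarith) L2 P3
  have final := glueFin g (a := -(k:ℝ)) L1 (fun ξ η h h' => P2 ξ η h h')
  exact ⟨c, hcpos, final⟩
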